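/- Let f be given by an admissible representation f(z) = (−2π/(a·log z))·(1 + Σ_{n≥1} Φ_n(z)/(log z)^n). Then for real x > 0 the derivative satisfies the asymptotic relation x·(log x)²·f'(x) → 2π/a as x → 0⁺; more precisely f'(x) = (2π/(a·log²x))·[ (1/x)·(1 + O(1/log x)) + O(1) ] as x → 0⁺. In particular f'(x) > 0 for all sufficiently small x > 0. -/

import Mathlib

open Complex Filter Topology

/-- `Phi c n z = Σ_{k≥0} c_{n,k} z^k`. -/
noncomputable def Phi (c : ℕ → ℕ → ℝ) (n : ℕ) (z : ℂ) : ℂ :=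
  ∑' k : ℕ, (c n k : ℂ) * z ^ k

/-- Termwise derivative `Σ_{k≥1} k·c_{n,k} z^{k-1}`. -/
noncomputable def PhiD (c : ℕ → ℕ → ℝ) (n : ℕ) (z : ℂ) : ℂ :=
  ∑' k : ℕ, ((k + 1 : ℕ) : ℂ) * (c n (k + 1) : ℂ) * z ^ k

/-- `f(z) = (−2π/(a·log z))·(1 + Σ_{n≥1} Φ_n(z)/(log z)^n)`, where `Complex.log`
is the branch with `log i = iπ/2`, continuous on the closed upper half-plane minus `0`. -/
noncomputable def fRep (a : ℝ) (c : ℕ → ℕ → ℝ) (z : ℂ) : ℂ :=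
  (-(2 * (Real.pi : ℂ)) / ((a : ℂ) * Complex.log z)) *
    (1 + ∑' n : ℕ, Phi c (n + 1) z / (Complex.log z) ^ (n + 1))

/-- Admissibility of the representation `fRep a c`. -/
def Admissible (a : ℝ) (c : ℕ → ℕ → ℝ) : Prop :=
  0 < a ∧
  (∃ B : ℝ, ∀ n : ℕ, 1 ≤ n → ∀ k : ℕ, 1 ≤ k → |c n k| ^ ((1 : ℝ) / (k : ℝ)) ≤ B) ∧
  (∃ r > (0 : ℝ), ∃ M > (0 : ℝ), ∀ n : ℕ, 1 ≤ n → ∀ z : ℂ,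
      ‖z‖ ≤ r → 0 ≤ z.im → ‖(Phi c n z)‖ ≤ M ^ n) ∧
  (∃ r > (0 : ℝ), ∃ M > (0 : ℝ), ∀ n : ℕ, 1 ≤ n → ∀ z : ℂ,
      ‖z‖ ≤ r → 0 ≤ z.im → ‖(PhiD c n z)‖ ≤ M ^ n) ∧
  c 1 0 ≠ 0

/-- Asymptotics of `f'(x)` for `x → 0⁺`: `x·(log x)²·f'(x) → 2π/a`, with the precise form
`f'(x) = (2π/(a log²x))·[(1/x)(1 + O(1/log x)) + O(1)]`, so that `f'(x) > 0` for small `x > 0`. -/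
lemma sum41 : Summable (fun n : ℕ => ((n : ℝ) + 1) * (1/2 : ℝ) ^ n) := by
  have h1 : Summable (fun n : ℕ => (n : ℝ) * (1/2 : ℝ) ^ n) := by
    have := summable_pow_mul_geometric_of_norm_lt_one (R := ℝ) 1 (r := (1/2 : ℝ))
      (by rw [Real.norm_eq_abs, abs_of_pos (by norm_num : (0:ℝ) < 1/2)]; norm_num)
    simpa using this
  have h2 : Summable (fun n : ℕ => (1/2 : ℝ) ^ n) :=
    summable_geometric_of_lt_one (by norm_num) (by norm_num)
  simpa [add_mul] using h1.add h2

lemma tsum41 : ∑' n : ℕ, ((n : ℝ) + 1) * (1/2 : ℝ) ^ n = 4 := by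
  have h1 : Summable (fun n : ℕ => (n : ℝ) * (1/2 : ℝ) ^ n) := by
    have := summable_pow_mul_geometric_of_norm_lt_one (R := ℝ) 1 (r := (1/2 : ℝ))
      (by rw [Real.norm_eq_abs, abs_of_pos (by norm_num : (0:ℝ) < 1/2)]; norm_num)
    simpa using this
  have h2 : Summable (fun n : ℕ => (1/2 : ℝ) ^ n) :=
    summable_geometric_of_lt_one (by norm_num) (by norm_num)
  have e : (fun n : ℕ => ((n : ℝ) + 1) * (1/2 : ℝ) ^ n)
      = fun n : ℕ => (n : ℝ) * (1/2 : ℝ) ^ n + (1/2 : ℝ) ^ n := by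
    funext n; ring
  rw [e, Summable.tsum_add h1 h2, tsum_geometric_of_lt_one (by norm_num) (by norm_num),
    tsum_coe_mul_geometric_of_norm_lt_one (by rw [Real.norm_eq_abs, abs_of_pos (by norm_num : (0:ℝ) < 1/2)]; norm_num)]
  norm_num

lemma summable_of_bound41 {f : ℕ → ℂ} (C : ℝ)
    (h : ∀ n, ‖(f n)‖ ≤ C * (((n : ℝ) + 1) * (1/2 : ℝ) ^ n)) : Summable f := by
  refine Summable.of_norm (Summable.of_nonneg_of_le (fun n => norm_nonneg _) (fun n => ?_)
    (sum41.mul_left C))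
  exact h n

lemma tsum_bound41 {f : ℕ → ℂ} {C : ℝ}
    (h : ∀ n, ‖(f n)‖ ≤ C * (((n : ℝ) + 1) * (1/2 : ℝ) ^ n)) :
    ‖(∑' n, f n)‖ ≤ 4 * C := by
  have h' : ∀ n, ‖f n‖ ≤ C * (((n : ℝ) + 1) * (1/2 : ℝ) ^ n) := by
    intro n; exact h n
  have hs : Summable fun n => ‖f n‖ :=
    Summable.of_nonneg_of_le (fun n => norm_nonneg _) h' (sum41.mul_left C)
  have := (norm_tsum_le_tsum_norm hs).trans (Summable.tsum_le_tsum h' hs (sum41.mul_left C))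
  rw [tsum_mul_left, tsum41] at this
  linarith

lemma half_pow_le (n : ℕ) : ((1 : ℝ)/2) ^ (n + 1) ≤ ((n : ℝ) + 1) * (1/2) ^ n := by
  rw [pow_succ]
  have h : (0:ℝ) ≤ (1/2 : ℝ) ^ n := by positivity
  nlinarith [h]

/-- Norm-summability of a power series with geometrically bounded coefficients. -/
lemma series_summable_norm (d : ℕ → ℝ) (B ρ : ℝ) (hB : 1 ≤ B) (hρB : ρ * B ≤ 1/2)
    (hc : ∀ k, 1 ≤ k → |d k| ≤ B ^ k) {z : ℂ} (hz : ‖z‖ ≤ ρ) :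
    Summable (fun k : ℕ => ‖(d k : ℂ) * z ^ k‖) := by
  have hρ0 : 0 ≤ ρ := le_trans (norm_nonneg z) hz
  refine Summable.of_nonneg_of_le (fun k => norm_nonneg _) (fun k => ?_)
    ((summable_geometric_of_lt_one (by norm_num) (by norm_num : (1/2:ℝ) < 1)).mul_left (|d 0| + 1))
  have habs : ‖(d k : ℂ) * z ^ k‖ = |d k| * (‖z‖) ^ k := by
    rw [norm_mul, norm_pow, Complex.norm_real, Real.norm_eq_abs]
  rcases Nat.eq_zero_or_pos k with hk | hk
  · subst hk
    have h0 : ‖(d 0 : ℂ) * z ^ 0‖ = |d 0| := by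
      simp [Complex.norm_real, Real.norm_eq_abs]
    rw [h0, pow_zero, mul_one]; linarith [abs_nonneg (d 0)]
  · rw [habs]
    have h1 : |d k| * (‖z‖) ^ k ≤ B ^ k * ρ ^ k := by
      apply mul_le_mul (hc k hk) (pow_le_pow_left₀ (norm_nonneg z) hz k)
        (by positivity) (by positivity)
    have h2 : B ^ k * ρ ^ k = (ρ * B) ^ k := by rw [mul_pow]; ring
    have h3 : (ρ * B) ^ k ≤ (1/2 : ℝ) ^ k :=
      pow_le_pow_left₀ (by positivity) hρB k
    have h4 : (1/2 : ℝ) ^ k ≤ (|d 0| + 1) * (1/2) ^ k := by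
      nlinarith [abs_nonneg (d 0), pow_nonneg (by norm_num : (0:ℝ) ≤ 1/2) k]
    linarith [h1, h3, h4, h2 ▸ h1]

/-- Differentiation of a power series with geometrically bounded coefficients,
inside the disc of radius `ρ`. -/
lemma series_hasDerivAt (d : ℕ → ℝ) (B ρ : ℝ) (hB : 1 ≤ B) (hρ : 0 < ρ) (hρB : ρ * B ≤ 1/2)
    (hc : ∀ k, 1 ≤ k → |d k| ≤ B ^ k) {z : ℂ} (hz : ‖z‖ < ρ) :
    HasDerivAt (fun w : ℂ => ∑' k : ℕ, (d k : ℂ) * w ^ k)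
      (∑' k : ℕ, ((k + 1 : ℕ) : ℂ) * (d (k + 1) : ℂ) * z ^ k) z := by
  set u : ℕ → ℝ := fun k => |d k| * k * ρ ^ (k - 1) with hu_def
  have hbound : ∀ k : ℕ, ∀ w : ℂ, ‖w‖ < ρ →
      ‖(d k : ℂ) * ((k : ℂ) * w ^ (k - 1))‖ ≤ u k := by
    intro k w hw
    have : ‖(d k : ℂ) * ((k : ℂ) * w ^ (k - 1))‖
        = |d k| * (k * (‖w‖) ^ (k - 1)) := by
      rw [norm_mul, norm_mul, norm_pow, Complex.norm_real, Real.norm_eq_abs,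
        Complex.norm_natCast]
    rw [this, hu_def]
    have h1 : (‖w‖) ^ (k-1) ≤ ρ ^ (k-1) :=
      pow_le_pow_left₀ (norm_nonneg w) hw.le _
    have : (k : ℝ) * (‖w‖) ^ (k - 1) ≤ (k:ℝ) * ρ ^ (k-1) := by
      apply mul_le_mul_of_nonneg_left h1 (by positivity)
    calc |d k| * ((k:ℝ) * (‖w‖) ^ (k - 1))
        ≤ |d k| * ((k:ℝ) * ρ ^ (k-1)) := by
          apply mul_le_mul_of_nonneg_left this (abs_nonneg _)
      _ = |d k| * k * ρ ^ (k-1) := by ring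
  have hu : Summable u := by
    refine Summable.of_nonneg_of_le (fun k => by positivity) (fun k => ?_)
      (sum41.mul_left (2 * B))
    rcases k with _ | k
    · have h0 : u 0 = 0 := by simp [hu_def]
      rw [h0]; positivity
    · rw [hu_def]
      simp only [Nat.add_sub_cancel]
      have hBρ0 : 0 ≤ ρ * B := by positivity
      have h1 : |d (k+1)| * ((k+1 : ℕ) : ℝ) * ρ ^ k ≤ B ^ (k+1) * (k+1) * ρ ^ k := by
        have := hc (k+1) (Nat.succ_le_succ (Nat.zero_le _))
        push_cast
        nlinarith [pow_nonneg hρ.le k, this, pow_nonneg (le_trans zero_le_one hB) (k+1),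
          mul_le_mul_of_nonneg_right this (by positivity : (0:ℝ) ≤ ((k:ℝ)+1) * ρ ^ k)]
      have h2 : B ^ (k+1) * (k+1) * ρ ^ k = B * ((k:ℝ)+1) * (ρ*B) ^ k := by
        rw [mul_pow, pow_succ]; ring
      have h3 : B * ((k:ℝ)+1) * (ρ*B) ^ k ≤ B * ((k:ℝ)+1) * (1/2) ^ k := by
        apply mul_le_mul_of_nonneg_left (pow_le_pow_left₀ hBρ0 hρB k) (by positivity)
      have h4 : B * ((k:ℝ)+1) * (1/2:ℝ) ^ k ≤ 2 * B * ((((k+1):ℕ):ℝ) + 1) * (1/2) ^ (k+1) := by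
        push_cast
        rw [pow_succ]
        nlinarith [pow_nonneg (by norm_num : (0:ℝ) ≤ 1/2) k, hB]
      push_cast at h1 h4 ⊢
      calc |d (k+1)| * ((k:ℝ)+1) * ρ ^ k ≤ B * ((k:ℝ)+1) * (1/2) ^ k := by
            rw [h2] at h1; linarith
        _ ≤ 2 * B * (((k:ℝ)+1) + 1) * (1/2) ^ (k+1) := by push_cast at h4 ⊢; linarith
        _ = 2 * B * ((((k:ℝ)+1) + 1) * (1/2) ^ (k+1)) := by ring
  have key := hasDerivAt_tsum_of_isPreconnected hu Metric.isOpen_ball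
    ((convex_ball (0:ℂ) ρ).isPreconnected)
    (g := fun k w => (d k : ℂ) * w ^ k) (g' := fun k w => (d k : ℂ) * ((k : ℂ) * w ^ (k - 1)))
    (fun k w _ => (hasDerivAt_pow k w).const_mul _)
    (fun k w hw => hbound k w (by simpa [Metric.mem_ball, Complex.dist_eq] using hw))
    (y₀ := 0) (by simp [Metric.mem_ball, hρ])
    (by
      apply Summable.of_norm
      exact series_summable_norm d B ρ hB hρB hc (by simp [hρ.le]))
    (by simp [Metric.mem_ball, Complex.dist_eq, hz] : z ∈ Metric.ball (0:ℂ) ρ)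
  have hs : Summable (fun k : ℕ => (d k : ℂ) * ((k : ℂ) * z ^ (k - 1))) := by
    apply Summable.of_norm
    exact Summable.of_nonneg_of_le (fun k => norm_nonneg _) (fun k => hbound k z hz) hu
  have heq : (∑' k : ℕ, (d k : ℂ) * ((k : ℂ) * z ^ (k - 1)))
      = ∑' k : ℕ, ((k + 1 : ℕ) : ℂ) * (d (k + 1) : ℂ) * z ^ k := by
    rw [Summable.tsum_eq_zero_add hs]
    simp only [Nat.cast_zero, zero_mul, mul_zero, zero_add]
    exact tsum_congr fun k => by push_cast; ring
  exact heq ▸ key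

/-- `δ₁`-term. -/
noncomputable def del1 (c : ℕ → ℕ → ℝ) (x : ℝ) : ℂ :=
  ∑' n : ℕ, ((n : ℂ) + 2) * Phi c (n + 1) (x : ℂ) / (Complex.log (x : ℂ)) ^ (n + 1)

/-- `δ₂`-term. -/
noncomputable def del2 (c : ℕ → ℕ → ℝ) (x : ℝ) : ℂ :=
  -(∑' n : ℕ, PhiD c (n + 1) (x : ℂ) / (Complex.log (x : ℂ)) ^ n)

set_option maxHeartbeats 1600000 in
theorem stmt8 (a : ℝ) (c : ℕ → ℕ → ℝ) (hadm : Admissible a c) :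
    Filter.Tendsto
      (fun x : ℝ => ((x * (Real.log x) ^ 2 : ℝ) : ℂ) * deriv (fun t : ℝ => fRep a c (t : ℂ)) x)
      (nhdsWithin 0 (Set.Ioi (0 : ℝ))) (nhds ((2 * Real.pi / a : ℝ) : ℂ)) ∧
    (∃ C > (0 : ℝ), ∀ᶠ x in nhdsWithin 0 (Set.Ioi (0 : ℝ)), ∃ δ₁ δ₂ : ℂ,
      ‖δ₁‖ ≤ C / |Real.log x| ∧ ‖δ₂‖ ≤ C ∧
      deriv (fun t : ℝ => fRep a c (t : ℂ)) x =
        ((2 * Real.pi / (a * (Real.log x) ^ 2) : ℝ) : ℂ) * ((1 / (x : ℂ)) * (1 + δ₁) + δ₂)) ∧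
    (∀ᶠ x in nhdsWithin 0 (Set.Ioi (0 : ℝ)),
      (deriv (fun t : ℝ => fRep a c (t : ℂ)) x).im = 0 ∧
      0 < (deriv (fun t : ℝ => fRep a c (t : ℂ)) x).re) := by
  obtain ⟨ha, ⟨B₀, hB₀⟩, ⟨r₁, hr₁, M₁, hM₁, hPhi⟩, ⟨r₂, hr₂, M₂, hM₂, hPhiDb⟩, -⟩ := hadm
  set B : ℝ := max B₀ 1 with hBdef
  have hB1 : (1 : ℝ) ≤ B := le_max_right _ _
  have hB0 : (0 : ℝ) < B := lt_of_lt_of_le one_pos hB1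
  have hc : ∀ n k : ℕ, 1 ≤ n → 1 ≤ k → |c n k| ≤ B ^ k := by
    intro n k hn hk
    have h := hB₀ n hn k hk
    have hk0 : (0 : ℝ) < (k : ℝ) := by exact_mod_cast hk
    have h0 : (0 : ℝ) ≤ |c n k| ^ ((1 : ℝ) / (k : ℝ)) := Real.rpow_nonneg (abs_nonneg _) _
    have hB₀0 : (0 : ℝ) ≤ B₀ := le_trans h0 h
    have h2 : (|c n k| ^ ((1 : ℝ) / (k : ℝ))) ^ (k : ℕ) ≤ B₀ ^ (k : ℕ) :=
      pow_le_pow_left₀ h0 h k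
    have h3 : (|c n k| ^ ((1 : ℝ) / (k : ℝ))) ^ (k : ℕ) = |c n k| := by
      rw [← Real.rpow_natCast (|c n k| ^ ((1 : ℝ) / (k : ℝ))) k,
        ← Real.rpow_mul (abs_nonneg _), one_div, inv_mul_cancel₀ (ne_of_gt hk0),
        Real.rpow_one]
    exact le_trans (h3 ▸ h2) (pow_le_pow_left₀ hB₀0 (le_max_left _ _) k)
  set M : ℝ := max M₁ M₂ with hMdef
  have hM : (0 : ℝ) < M := lt_of_lt_of_le hM₁ (le_max_left _ _)
  set ρ : ℝ := min (min r₁ r₂) (1 / (2 * B)) with hρdef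
  have hρ0 : (0 : ℝ) < ρ := lt_min (lt_min hr₁ hr₂) (by positivity)
  have hρB : ρ * B ≤ 1 / 2 := by
    have h1 : ρ ≤ 1 / (2 * B) := min_le_right _ _
    have h2 : ρ * B ≤ (1 / (2 * B)) * B := mul_le_mul_of_nonneg_right h1 hB0.le
    calc ρ * B ≤ (1 / (2 * B)) * B := h2
      _ = 1 / 2 := by field_simp
  set ε : ℝ := min ρ (min (Real.exp (-(16 * M + 2))) (1 / (16 * M + 1))) with hεdef
  have hε0 : (0 : ℝ) < ε := lt_min hρ0 (lt_min (Real.exp_pos _) (by positivity))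
  -- facts about points of `Ioo 0 ε`
  have hfacts : ∀ y ∈ Set.Ioo (0 : ℝ) ε, 0 < y ∧ y < ρ ∧ 16 * M + 2 ≤ |Real.log y| ∧
      y < 1 / (16 * M + 1) ∧ Complex.log (y : ℂ) = ((Real.log y : ℝ) : ℂ) ∧
      ‖(Complex.log (y : ℂ))‖ = |Real.log y| ∧ Complex.log (y : ℂ) ≠ 0 := by
    intro y hy
    obtain ⟨hy0, hyε⟩ := hy
    have hlog : Real.log y < -(16 * M + 2) := by
      have h2 : y < Real.exp (-(16 * M + 2)) :=
        lt_of_lt_of_le hyε (le_trans (min_le_right _ _) (min_le_left _ _))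
      calc Real.log y < Real.log (Real.exp (-(16 * M + 2))) := Real.log_lt_log hy0 h2
        _ = -(16 * M + 2) := Real.log_exp _
    have hlogneg : Real.log y < 0 := by nlinarith
    have habs : 16 * M + 2 ≤ |Real.log y| := by
      rw [abs_of_neg hlogneg]; linarith
    have hlogne : Real.log y ≠ 0 := ne_of_lt hlogneg
    refine ⟨hy0, lt_of_lt_of_le hyε (min_le_left _ _), habs,
      lt_of_lt_of_le hyε (le_trans (min_le_right _ _) (min_le_right _ _)),
      (Complex.ofReal_log hy0.le).symm, ?_, ?_⟩
    · rw [← Complex.ofReal_log hy0.le, Complex.norm_real, Real.norm_eq_abs]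
    · rw [← Complex.ofReal_log hy0.le]
      exact_mod_cast hlogne
  have hyr : ∀ y ∈ Set.Ioo (0 : ℝ) ε, ‖(y : ℂ)‖ < ρ := by
    intro y hy
    rw [Complex.norm_real, Real.norm_eq_abs, abs_of_pos (hfacts y hy).1]
    exact (hfacts y hy).2.1
  have hP : ∀ (n : ℕ), ∀ y ∈ Set.Ioo (0 : ℝ) ε, ‖(Phi c (n + 1) (y : ℂ))‖ ≤ M ^ (n + 1) := by
    intro n y hy
    have h := hPhi (n + 1) (Nat.le_add_left 1 n) (y : ℂ)
      (le_trans (hyr y hy).le (le_trans (min_le_left _ _) (min_le_left _ _)))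
      (by simp)
    exact le_trans h (pow_le_pow_left₀ hM₁.le (le_max_left _ _) _)
  have hQ : ∀ (n : ℕ), ∀ y ∈ Set.Ioo (0 : ℝ) ε, ‖(PhiD c (n + 1) (y : ℂ))‖ ≤ M ^ (n + 1) := by
    intro n y hy
    have h := hPhiDb (n + 1) (Nat.le_add_left 1 n) (y : ℂ)
      (le_trans (hyr y hy).le (le_trans (min_le_left _ _) (min_le_right _ _)))
      (by simp)
    exact le_trans h (pow_le_pow_left₀ hM₂.le (le_max_right _ _) _)
  have hPhiDeriv : ∀ n : ℕ, ∀ z : ℂ, ‖z‖ < ρ →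
      HasDerivAt (Phi c (n + 1)) (PhiD c (n + 1) z) z := by
    intro n z hz
    unfold Phi PhiD
    exact series_hasDerivAt (c (n + 1)) B ρ hB1 hρ0 hρB
      (fun k hk => hc (n + 1) k (Nat.le_add_left 1 n) hk) hz
  
  -- the central computation
  have main : ∀ x ∈ Set.Ioo (0 : ℝ) ε,
      deriv (fun t : ℝ => fRep a c (t : ℂ)) x
        = ((2 * Real.pi / (a * (Real.log x) ^ 2) : ℝ) : ℂ) *
            ((1 / (x : ℂ)) * (1 + del1 c x) + del2 c x)
      ∧ ‖(del1 c x)‖ ≤ 8 * M / |Real.log x|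
      ∧ ‖(del2 c x)‖ ≤ 8 * M
      ∧ (∃ E1 : ℝ, del1 c x = (E1 : ℂ)) ∧ (∃ E2 : ℝ, del2 c x = (E2 : ℂ)) := by
    intro x hx
    obtain ⟨hx0, hxρ, hLx, hx16, hlx, habsl, hlne⟩ := hfacts x hx
    have hLpos : (0 : ℝ) < |Real.log x| := by nlinarith
    have hxne : (x : ℂ) ≠ 0 := by exact_mod_cast ne_of_gt hx0
    have hane : (a : ℂ) ≠ 0 := by exact_mod_cast ne_of_gt ha
    -- basic quotient bound
    have hhalf : ∀ y ∈ Set.Ioo (0 : ℝ) ε, M / |Real.log y| ≤ 1 / 2 := by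
      intro y hy
      have h := (hfacts y hy).2.2.1
      have hLy : (0 : ℝ) < |Real.log y| := by nlinarith
      rw [div_le_iff₀ hLy]
      nlinarith
    have hdiv : ∀ y ∈ Set.Ioo (0 : ℝ) ε, ∀ (k : ℕ) (w : ℂ), ‖w‖ ≤ M ^ (k + 1) →
        ‖(w / (Complex.log (y : ℂ)) ^ (k + 1))‖ ≤ (1 / 2 : ℝ) ^ (k + 1) := by
      intro y hy k w hw
      obtain ⟨hy0, -, hLy, -, -, habsly, -⟩ := hfacts y hy
      have hLypos : (0 : ℝ) < |Real.log y| := by nlinarith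
      rw [norm_div, norm_pow, habsly]
      calc ‖w‖ / |Real.log y| ^ (k + 1)
          ≤ M ^ (k + 1) / |Real.log y| ^ (k + 1) :=
            div_le_div₀ (by positivity) hw (by positivity) le_rfl
        _ = (M / |Real.log y|) ^ (k + 1) := by rw [div_pow]
        _ ≤ (1 / 2 : ℝ) ^ (k + 1) := pow_le_pow_left₀ (by positivity) (hhalf y hy) _
    -- summability facts at x
    have s1 : Summable (fun n : ℕ => Phi c (n + 1) (x : ℂ) / (Complex.log (x : ℂ)) ^ (n + 1)) := by
      apply summable_of_bound41 1
      intro n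
      calc ‖(Phi c (n + 1) (x : ℂ) / (Complex.log (x : ℂ)) ^ (n + 1))‖
          ≤ (1 / 2 : ℝ) ^ (n + 1) := hdiv x hx n _ (hP n x hx)
        _ ≤ 1 * (((n : ℝ) + 1) * (1 / 2) ^ n) := by rw [one_mul]; exact half_pow_le n
    have s2 : Summable (fun n : ℕ => PhiD c (n + 1) (x : ℂ) / (Complex.log (x : ℂ)) ^ (n + 1)) := by
      apply summable_of_bound41 1
      intro n
      calc ‖(PhiD c (n + 1) (x : ℂ) / (Complex.log (x : ℂ)) ^ (n + 1))‖
          ≤ (1 / 2 : ℝ) ^ (n + 1) := hdiv x hx n _ (hQ n x hx)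
        _ ≤ 1 * (((n : ℝ) + 1) * (1 / 2) ^ n) := by rw [one_mul]; exact half_pow_le n
    have hnat : ∀ n : ℕ, ‖((n : ℂ) + 1)‖ = (n : ℝ) + 1 := by
      intro n
      have : ((n : ℂ) + 1) = (((n : ℝ) + 1 : ℝ) : ℂ) := by push_cast; ring
      rw [this, Complex.norm_real, Real.norm_eq_abs, abs_of_pos (by positivity)]
    have s4 : Summable (fun n : ℕ =>
        ((n : ℂ) + 1) * Phi c (n + 1) (x : ℂ) / (Complex.log (x : ℂ)) ^ (n + 1)) := by
      apply summable_of_bound41 1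
      intro n
      rw [mul_div_assoc, norm_mul, hnat]
      calc ((n : ℝ) + 1) * ‖(Phi c (n + 1) (x : ℂ) / (Complex.log (x : ℂ)) ^ (n + 1))‖
          ≤ ((n : ℝ) + 1) * (1 / 2 : ℝ) ^ (n + 1) :=
            mul_le_mul_of_nonneg_left (hdiv x hx n _ (hP n x hx)) (by positivity)
        _ ≤ ((n : ℝ) + 1) * (1 / 2 : ℝ) ^ n :=
            mul_le_mul_of_nonneg_left
              (pow_le_pow_of_le_one (by norm_num) (by norm_num) (Nat.le_succ n))
              (by positivity)
        _ = 1 * (((n : ℝ) + 1) * (1 / 2) ^ n) := by ring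
    have s3 : Summable (fun n : ℕ =>
        ((n : ℂ) + 1) * Phi c (n + 1) (x : ℂ) / ((x : ℂ) * (Complex.log (x : ℂ)) ^ (n + 2))) := by
      apply summable_of_bound41 (2 / x)
      intro n
      have h1 : ‖(((n : ℂ) + 1) * Phi c (n + 1) (x : ℂ) /
          ((x : ℂ) * (Complex.log (x : ℂ)) ^ (n + 2)))‖
          = ((n : ℝ) + 1) * ‖(Phi c (n + 1) (x : ℂ))‖ /
            (x * |Real.log x| ^ (n + 2)) := by
        rw [norm_div, norm_mul, norm_mul, norm_pow, hnat, habsl, Complex.norm_real, Real.norm_eq_abs,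
          abs_of_pos hx0]
      rw [h1]
      have hL1 : (1 : ℝ) ≤ |Real.log x| := by nlinarith
      calc ((n : ℝ) + 1) * ‖(Phi c (n + 1) (x : ℂ))‖ / (x * |Real.log x| ^ (n + 2))
          ≤ ((n : ℝ) + 1) * M ^ (n + 1) / (x * |Real.log x| ^ (n + 1)) := by
            have h2 : |Real.log x| ^ (n + 1) ≤ |Real.log x| ^ (n + 2) :=
              pow_le_pow_right₀ hL1 (Nat.le_succ _)
            exact div_le_div₀ (by positivity)
              (mul_le_mul_of_nonneg_left (hP n x hx) (by positivity))
              (by positivity) (mul_le_mul_of_nonneg_left h2 hx0.le)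
        _ = (1 / x) * (((n : ℝ) + 1) * (M / |Real.log x|) ^ (n + 1)) := by
            rw [div_pow]; field_simp; try ring
        _ ≤ (1 / x) * (((n : ℝ) + 1) * (1 / 2 : ℝ) ^ (n + 1)) :=
            mul_le_mul_of_nonneg_left
              (mul_le_mul_of_nonneg_left
                (pow_le_pow_left₀ (by positivity) (hhalf x hx) _) (by positivity))
              (by positivity)
        _ ≤ (1 / x) * (((n : ℝ) + 1) * (1 / 2 : ℝ) ^ n) :=
            mul_le_mul_of_nonneg_left
              (mul_le_mul_of_nonneg_left
                (pow_le_pow_of_le_one (by norm_num) (by norm_num) (Nat.le_succ n))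
                (by positivity)) (by positivity)
        _ ≤ (2 / x) * (((n : ℝ) + 1) * (1 / 2 : ℝ) ^ n) :=
            mul_le_mul_of_nonneg_right
              (div_le_div₀ (by norm_num) (by norm_num) hx0 le_rfl) (by positivity)
    -- bounds for del1, del2
    have hb5 : ∀ n : ℕ, ‖(((n : ℂ) + 2) * Phi c (n + 1) (x : ℂ) /
        (Complex.log (x : ℂ)) ^ (n + 1))‖ ≤ (2 * (M / |Real.log x|)) * (((n : ℝ) + 1) * (1 / 2) ^ n) := by
      intro n
      have hnat2 : ‖((n : ℂ) + 2)‖ = (n : ℝ) + 2 := by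
        have : ((n : ℂ) + 2) = (((n : ℝ) + 2 : ℝ) : ℂ) := by push_cast; ring
        rw [this, Complex.norm_real, Real.norm_eq_abs, abs_of_pos (by positivity)]
      rw [mul_div_assoc, norm_mul, hnat2]
      have hd := hdiv x hx n _ (hP n x hx)
      have hMq : (0:ℝ) < M / |Real.log x| := by positivity
      have h2 : ‖(Phi c (n + 1) (x : ℂ) / (Complex.log (x : ℂ)) ^ (n + 1))‖
          ≤ (M / |Real.log x|) * (1 / 2 : ℝ) ^ n := by
        rw [norm_div, norm_pow, habsl]
        calc ‖(Phi c (n + 1) (x : ℂ))‖ / |Real.log x| ^ (n + 1)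
            ≤ M ^ (n + 1) / |Real.log x| ^ (n + 1) :=
              div_le_div₀ (by positivity) (hP n x hx) (by positivity) le_rfl
          _ = (M / |Real.log x|) * (M / |Real.log x|) ^ n := by
              rw [div_pow, pow_succ]; ring
          _ ≤ (M / |Real.log x|) * (1 / 2 : ℝ) ^ n :=
              mul_le_mul_of_nonneg_left
                (pow_le_pow_left₀ (by positivity) (hhalf x hx) _) (by positivity)
      calc ((n : ℝ) + 2) * ‖(Phi c (n + 1) (x : ℂ) / (Complex.log (x : ℂ)) ^ (n + 1))‖
          ≤ ((n : ℝ) + 2) * ((M / |Real.log x|) * (1 / 2 : ℝ) ^ n) :=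
            mul_le_mul_of_nonneg_left h2 (by positivity)
        _ ≤ (2 * (M / |Real.log x|)) * (((n : ℝ) + 1) * (1 / 2) ^ n) := by
            nlinarith [mul_nonneg (mul_nonneg hMq.le
              (pow_nonneg (by norm_num : (0:ℝ) ≤ 1/2) n))
              (Nat.cast_nonneg n : (0:ℝ) ≤ (n:ℝ))]
    have hb6 : ∀ n : ℕ, ‖(PhiD c (n + 1) (x : ℂ) / (Complex.log (x : ℂ)) ^ n)‖
        ≤ M * (((n : ℝ) + 1) * (1 / 2) ^ n) := by
      intro n
      rw [norm_div, norm_pow, habsl]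
      calc ‖(PhiD c (n + 1) (x : ℂ))‖ / |Real.log x| ^ n
          ≤ M ^ (n + 1) / |Real.log x| ^ n :=
            div_le_div₀ (by positivity) (hQ n x hx) (by positivity) le_rfl
        _ = M * (M / |Real.log x|) ^ n := by rw [div_pow, pow_succ]; field_simp
        _ ≤ M * (1 / 2 : ℝ) ^ n :=
            mul_le_mul_of_nonneg_left
              (pow_le_pow_left₀ (by positivity) (hhalf x hx) _) hM.le
        _ ≤ M * (((n : ℝ) + 1) * (1 / 2) ^ n) := by
            nlinarith [mul_nonneg (mul_nonneg hM.le
              (pow_nonneg (by norm_num : (0:ℝ) ≤ 1/2) n))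
              (Nat.cast_nonneg n : (0:ℝ) ≤ (n:ℝ))]
    have hdel1b : ‖(del1 c x)‖ ≤ 8 * M / |Real.log x| := by
      have := tsum_bound41 hb5
      rw [del1]
      calc ‖(∑' n : ℕ, ((n : ℂ) + 2) * Phi c (n + 1) (x : ℂ) /
            (Complex.log (x : ℂ)) ^ (n + 1))‖ ≤ 4 * (2 * (M / |Real.log x|)) := this
        _ = 8 * M / |Real.log x| := by field_simp; ring
    have hdel2b : ‖(del2 c x)‖ ≤ 8 * M := by
      have := tsum_bound41 hb6
      rw [del2, norm_neg]
      calc ‖(∑' n : ℕ, PhiD c (n + 1) (x : ℂ) / (Complex.log (x : ℂ)) ^ n)‖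
          ≤ 4 * M := this
        _ ≤ 8 * M := by linarith
    have s5 : Summable (fun n : ℕ => ((n : ℂ) + 2) * Phi c (n + 1) (x : ℂ) /
        (Complex.log (x : ℂ)) ^ (n + 1)) := summable_of_bound41 _ hb5
    have s6 : Summable (fun n : ℕ => PhiD c (n + 1) (x : ℂ) / (Complex.log (x : ℂ)) ^ n) :=
      summable_of_bound41 _ hb6
    -- derivative of each summand of the series
    have hgderiv : ∀ n : ℕ, ∀ y ∈ Set.Ioo (0 : ℝ) ε,
        HasDerivAt (fun t : ℝ => Phi c (n + 1) (t : ℂ) / (Complex.log (t : ℂ)) ^ (n + 1))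
          (PhiD c (n + 1) (y : ℂ) / (Complex.log (y : ℂ)) ^ (n + 1)
            - ((n : ℂ) + 1) * Phi c (n + 1) (y : ℂ) / ((y : ℂ) * (Complex.log (y : ℂ)) ^ (n + 2))) y := by
      intro n y hy
      obtain ⟨hy0, hyρ, hLy, -, hly, habsly, hlyne⟩ := hfacts y hy
      have hyne : (y : ℂ) ≠ 0 := by exact_mod_cast ne_of_gt hy0
      have h1 : HasDerivAt (Phi c (n + 1)) (PhiD c (n + 1) (y : ℂ)) (y : ℂ) :=
        hPhiDeriv n (y : ℂ) (hyr y hy)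
      have h2 : HasDerivAt Complex.log ((y : ℂ))⁻¹ (y : ℂ) :=
        Complex.hasDerivAt_log (Complex.mem_slitPlane_iff.mpr (Or.inl (by simpa using hy0)))
      have h3 := h2.pow (n + 1)
      have h4 := h1.div h3 (pow_ne_zero _ hlyne)
      have h5 := h4.comp_ofReal
      convert h5 using 1
      · rfl
      simp only [Pi.pow_apply, Nat.add_sub_cancel]
      push_cast
      field_simp
      ring
    -- derivative of the series
    have houter : HasDerivAt
        (fun t : ℝ => ∑' n : ℕ, Phi c (n + 1) (t : ℂ) / (Complex.log (t : ℂ)) ^ (n + 1))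
        (∑' n : ℕ, (PhiD c (n + 1) (x : ℂ) / (Complex.log (x : ℂ)) ^ (n + 1)
          - ((n : ℂ) + 1) * Phi c (n + 1) (x : ℂ) / ((x : ℂ) * (Complex.log (x : ℂ)) ^ (n + 2)))) x := by
      have hxmem : x ∈ Set.Ioo (x / 2) ε := ⟨by linarith, hx.2⟩
      have hsub : Set.Ioo (x / 2) ε ⊆ Set.Ioo (0 : ℝ) ε := fun y hy =>
        ⟨lt_trans (by linarith) hy.1, hy.2⟩
      refine hasDerivAt_tsum_of_isPreconnected
        (u := fun n : ℕ => (1 + 2 / x) * (((n : ℝ) + 1) * (1 / 2) ^ n))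
        (sum41.mul_left _) isOpen_Ioo (convex_Ioo _ _).isPreconnected
        (fun n y hy => hgderiv n y (hsub hy)) (fun n y hy => ?_) hxmem s1 hxmem
      obtain ⟨hy0, hyρ, hLy, -, hly, habsly, hlyne⟩ := hfacts y (hsub hy)
      have hLypos : (0 : ℝ) < |Real.log y| := by nlinarith
      have hL1 : (1 : ℝ) ≤ |Real.log y| := by nlinarith
      have hy2 : x / 2 < y := hy.1
      have hA : ‖(PhiD c (n + 1) (y : ℂ) / (Complex.log (y : ℂ)) ^ (n + 1))‖
          ≤ ((n : ℝ) + 1) * (1 / 2) ^ n :=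
        le_trans (hdiv y (hsub hy) n _ (hQ n y (hsub hy))) (half_pow_le n)
      have hB : ‖(((n : ℂ) + 1) * Phi c (n + 1) (y : ℂ) /
          ((y : ℂ) * (Complex.log (y : ℂ)) ^ (n + 2)))‖
          ≤ (2 / x) * (((n : ℝ) + 1) * (1 / 2) ^ n) := by
        have h1 : ‖(((n : ℂ) + 1) * Phi c (n + 1) (y : ℂ) /
            ((y : ℂ) * (Complex.log (y : ℂ)) ^ (n + 2)))‖
            = ((n : ℝ) + 1) * ‖(Phi c (n + 1) (y : ℂ))‖ /
              (y * |Real.log y| ^ (n + 2)) := by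
          rw [norm_div, norm_mul, norm_mul, norm_pow, hnat, habsly, Complex.norm_real, Real.norm_eq_abs,
            abs_of_pos hy0]
        rw [h1]
        calc ((n : ℝ) + 1) * ‖(Phi c (n + 1) (y : ℂ))‖ / (y * |Real.log y| ^ (n + 2))
            ≤ ((n : ℝ) + 1) * M ^ (n + 1) / (y * |Real.log y| ^ (n + 1)) := by
              have h2 : |Real.log y| ^ (n + 1) ≤ |Real.log y| ^ (n + 2) :=
                pow_le_pow_right₀ hL1 (Nat.le_succ _)
              exact div_le_div₀ (by positivity)
                (mul_le_mul_of_nonneg_left (hP n y (hsub hy)) (by positivity))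
                (by positivity) (mul_le_mul_of_nonneg_left h2 hy0.le)
          _ = (1 / y) * (((n : ℝ) + 1) * (M / |Real.log y|) ^ (n + 1)) := by
              rw [div_pow]; field_simp; try ring
          _ ≤ (2 / x) * (((n : ℝ) + 1) * (1 / 2 : ℝ) ^ (n + 1)) := by
              have hxy : 1 / y ≤ 2 / x := by
                rw [div_le_div_iff₀ hy0 hx0]; nlinarith
              have hq : (M / |Real.log y|) ^ (n + 1) ≤ (1 / 2 : ℝ) ^ (n + 1) :=
                pow_le_pow_left₀ (by positivity) (hhalf y (hsub hy)) _
              have hx2 : (0:ℝ) < 2 / x := by positivity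
              exact mul_le_mul hxy
                (mul_le_mul_of_nonneg_left hq (by positivity)) (by positivity) hx2.le
          _ ≤ (2 / x) * (((n : ℝ) + 1) * (1 / 2 : ℝ) ^ n) :=
              mul_le_mul_of_nonneg_left
                (mul_le_mul_of_nonneg_left
                  (pow_le_pow_of_le_one (by norm_num) (by norm_num) (Nat.le_succ n))
                  (by positivity)) (by positivity)
      calc ‖PhiD c (n + 1) (y : ℂ) / (Complex.log (y : ℂ)) ^ (n + 1)
            - ((n : ℂ) + 1) * Phi c (n + 1) (y : ℂ) / ((y : ℂ) * (Complex.log (y : ℂ)) ^ (n + 2))‖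
          ≤ ‖(PhiD c (n + 1) (y : ℂ) / (Complex.log (y : ℂ)) ^ (n + 1))‖
            + ‖(((n : ℂ) + 1) * Phi c (n + 1) (y : ℂ) /
              ((y : ℂ) * (Complex.log (y : ℂ)) ^ (n + 2)))‖ := by
            exact norm_sub_le _ _
        _ ≤ ((n : ℝ) + 1) * (1 / 2) ^ n + (2 / x) * (((n : ℝ) + 1) * (1 / 2) ^ n) :=
            add_le_add hA hB
        _ = (1 + 2 / x) * (((n : ℝ) + 1) * (1 / 2) ^ n) := by ring
    -- derivative of the prefactor
    have hU : HasDerivAt (fun t : ℝ => -(2 * (Real.pi : ℂ)) / ((a : ℂ) * Complex.log (t : ℂ)))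
        (2 * (Real.pi : ℂ) / ((a : ℂ) * (Complex.log (x : ℂ)) ^ 2 * (x : ℂ))) x := by
      have h2 : HasDerivAt Complex.log ((x : ℂ))⁻¹ (x : ℂ) :=
        Complex.hasDerivAt_log (Complex.mem_slitPlane_iff.mpr (Or.inl (by simpa using hx0)))
      have h3 := h2.const_mul (a : ℂ)
      have h4 := (hasDerivAt_const ((x : ℂ)) (-(2 * (Real.pi : ℂ)))).div h3
        (mul_ne_zero hane hlne)
      have h5 := h4.comp_ofReal
      convert h5 using 1
      · rfl
      field_simp
      ring
    have hV := houter.const_add (1 : ℂ)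
    have hprod := hU.mul hV
    have hDx : HasDerivAt (fun t : ℝ => fRep a c (t : ℂ))
        (2 * (Real.pi : ℂ) / ((a : ℂ) * (Complex.log (x : ℂ)) ^ 2 * (x : ℂ)) *
          (1 + ∑' n : ℕ, Phi c (n + 1) (x : ℂ) / (Complex.log (x : ℂ)) ^ (n + 1))
        + -(2 * (Real.pi : ℂ)) / ((a : ℂ) * Complex.log (x : ℂ)) *
          (∑' n : ℕ, (PhiD c (n + 1) (x : ℂ) / (Complex.log (x : ℂ)) ^ (n + 1)
            - ((n : ℂ) + 1) * Phi c (n + 1) (x : ℂ) / ((x : ℂ) * (Complex.log (x : ℂ)) ^ (n + 2))))) x := by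
      have : (fun t : ℝ => fRep a c (t : ℂ))
          = fun t : ℝ => (-(2 * (Real.pi : ℂ)) / ((a : ℂ) * Complex.log (t : ℂ))) *
            (1 + ∑' n : ℕ, Phi c (n + 1) (t : ℂ) / (Complex.log (t : ℂ)) ^ (n + 1)) := rfl
      rw [this]
      exact hprod
    -- rewrite the derivative value
    have hvalue : 2 * (Real.pi : ℂ) / ((a : ℂ) * (Complex.log (x : ℂ)) ^ 2 * (x : ℂ)) *
          (1 + ∑' n : ℕ, Phi c (n + 1) (x : ℂ) / (Complex.log (x : ℂ)) ^ (n + 1))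
        + -(2 * (Real.pi : ℂ)) / ((a : ℂ) * Complex.log (x : ℂ)) *
          (∑' n : ℕ, (PhiD c (n + 1) (x : ℂ) / (Complex.log (x : ℂ)) ^ (n + 1)
            - ((n : ℂ) + 1) * Phi c (n + 1) (x : ℂ) / ((x : ℂ) * (Complex.log (x : ℂ)) ^ (n + 2))))
        = ((2 * Real.pi / (a * (Real.log x) ^ 2) : ℝ) : ℂ) *
            ((1 / (x : ℂ)) * (1 + del1 c x) + del2 c x) := by
      have hsplit : (∑' n : ℕ, (PhiD c (n + 1) (x : ℂ) / (Complex.log (x : ℂ)) ^ (n + 1)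
          - ((n : ℂ) + 1) * Phi c (n + 1) (x : ℂ) / ((x : ℂ) * (Complex.log (x : ℂ)) ^ (n + 2))))
          = (∑' n : ℕ, PhiD c (n + 1) (x : ℂ) / (Complex.log (x : ℂ)) ^ (n + 1))
            - (∑' n : ℕ, ((n : ℂ) + 1) * Phi c (n + 1) (x : ℂ) /
              ((x : ℂ) * (Complex.log (x : ℂ)) ^ (n + 2))) := Summable.tsum_sub s2 s3
      have hSA : (∑' n : ℕ, PhiD c (n + 1) (x : ℂ) / (Complex.log (x : ℂ)) ^ (n + 1))
          = (∑' n : ℕ, PhiD c (n + 1) (x : ℂ) / (Complex.log (x : ℂ)) ^ n) / Complex.log (x : ℂ) := by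
        rw [← tsum_div_const]
        exact tsum_congr fun n => by rw [pow_succ, ← div_div]
      have hSB : (∑' n : ℕ, ((n : ℂ) + 1) * Phi c (n + 1) (x : ℂ) /
            ((x : ℂ) * (Complex.log (x : ℂ)) ^ (n + 2)))
          = (∑' n : ℕ, ((n : ℂ) + 1) * Phi c (n + 1) (x : ℂ) / (Complex.log (x : ℂ)) ^ (n + 1))
            / ((x : ℂ) * Complex.log (x : ℂ)) := by
        rw [← tsum_div_const]
        refine tsum_congr fun n => ?_
        rw [div_div]
        congr 1
        ring
      have hd1 : del1 c x
          = (∑' n : ℕ, Phi c (n + 1) (x : ℂ) / (Complex.log (x : ℂ)) ^ (n + 1))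
            + (∑' n : ℕ, ((n : ℂ) + 1) * Phi c (n + 1) (x : ℂ) / (Complex.log (x : ℂ)) ^ (n + 1)) := by
        rw [del1, ← Summable.tsum_add s1 s4]
        exact tsum_congr fun n => by ring
      have hd2 : del2 c x = -(∑' n : ℕ, PhiD c (n + 1) (x : ℂ) / (Complex.log (x : ℂ)) ^ n) := rfl
      rw [hsplit, hSA, hSB, hd1]
      rw [show ((2 * Real.pi / (a * (Real.log x) ^ 2) : ℝ) : ℂ)
        = 2 * (Real.pi : ℂ) / ((a : ℂ) * ((Real.log x : ℝ) : ℂ) ^ 2) by push_cast; ring]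
      rw [del2, hlx]
      have hLne : ((Real.log x : ℝ) : ℂ) ≠ 0 := by rwa [hlx] at hlne
      simp only [div_eq_mul_inv, mul_inv, inv_pow]
      ring
    -- reality of del1, del2
    have hPhiReal : ∀ n : ℕ, Phi c n (x : ℂ) = ((∑' k : ℕ, c n k * x ^ k : ℝ) : ℂ) := by
      intro n
      rw [Phi, Complex.ofReal_tsum]
      exact tsum_congr fun k => by push_cast; ring
    have hPhiDReal : ∀ n : ℕ, PhiD c n (x : ℂ)
        = ((∑' k : ℕ, ((k : ℝ) + 1) * c n (k + 1) * x ^ k : ℝ) : ℂ) := by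
      intro n
      rw [PhiD, Complex.ofReal_tsum]
      exact tsum_congr fun k => by push_cast; ring
    have hE1 : ∃ E1 : ℝ, del1 c x = (E1 : ℂ) := by
      refine ⟨∑' n : ℕ, ((n : ℝ) + 2) * (∑' k : ℕ, c (n + 1) k * x ^ k) /
        (Real.log x) ^ (n + 1), ?_⟩
      rw [del1, Complex.ofReal_tsum]
      refine tsum_congr fun n => ?_
      rw [hPhiReal (n + 1), hlx]
      push_cast
      ring
    have hE2 : ∃ E2 : ℝ, del2 c x = (E2 : ℂ) := by
      refine ⟨-(∑' n : ℕ, (∑' k : ℕ, ((k : ℝ) + 1) * c (n + 1) (k + 1) * x ^ k) /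
        (Real.log x) ^ n), ?_⟩
      rw [del2, Complex.ofReal_neg, Complex.ofReal_tsum]
      congr 1
      refine tsum_congr fun n => ?_
      rw [hPhiDReal (n + 1), hlx]
      push_cast
      ring
    exact ⟨by rw [hDx.deriv, hvalue], hdel1b, hdel2b, hE1, hE2⟩
  
  have hmem : Set.Ioo (0 : ℝ) ε ∈ nhdsWithin (0 : ℝ) (Set.Ioi 0) :=
    Ioo_mem_nhdsGT_of_mem ⟨le_refl 0, hε0⟩
  refine ⟨?_, ⟨8 * M, by positivity, ?_⟩, ?_⟩
  · -- the limit statement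
    rw [← tendsto_sub_nhds_zero_iff]
    apply squeeze_zero_norm' (a := fun x : ℝ =>
      (2 * Real.pi / a) * (8 * M / |Real.log x|) + (2 * Real.pi / a * x) * (8 * M))
    · filter_upwards [hmem] with x hx
      obtain ⟨heq, h1, h2, -, -⟩ := main x hx
      obtain ⟨hx0, -, hLx, -, hlx, -, hlne⟩ := hfacts x hx
      have hLpos : (0 : ℝ) < |Real.log x| := by nlinarith
      have hLne : Real.log x ≠ 0 := abs_pos.mp hLpos
      have hxne : (x : ℂ) ≠ 0 := by exact_mod_cast ne_of_gt hx0
      have hane : (a : ℂ) ≠ 0 := by exact_mod_cast ne_of_gt ha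
      have hLneC : ((Real.log x : ℝ) : ℂ) ≠ 0 := by exact_mod_cast hLne
      rw [heq]
      have hkey : ((x * (Real.log x) ^ 2 : ℝ) : ℂ) *
          (((2 * Real.pi / (a * (Real.log x) ^ 2) : ℝ) : ℂ) *
            ((1 / (x : ℂ)) * (1 + del1 c x) + del2 c x)) - ((2 * Real.pi / a : ℝ) : ℂ)
          = ((2 * Real.pi / a : ℝ) : ℂ) * del1 c x
            + ((2 * Real.pi / a * x : ℝ) : ℂ) * del2 c x := by
        push_cast
        field_simp [hxne, hane, hLneC]
        ring
      rw [hkey]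
      have hpa : (0 : ℝ) < 2 * Real.pi / a := by positivity
      calc ‖((2 * Real.pi / a : ℝ) : ℂ) * del1 c x
            + ((2 * Real.pi / a * x : ℝ) : ℂ) * del2 c x‖
          ≤ ‖((2 * Real.pi / a : ℝ) : ℂ) * del1 c x‖
            + ‖((2 * Real.pi / a * x : ℝ) : ℂ) * del2 c x‖ := norm_add_le _ _
        _ ≤ (2 * Real.pi / a) * (8 * M / |Real.log x|) + (2 * Real.pi / a * x) * (8 * M) := by
            rw [norm_mul, norm_mul,
              Complex.norm_real, Complex.norm_real, Real.norm_eq_abs, Real.norm_eq_abs,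
              abs_of_pos hpa, abs_of_pos (by positivity : (0:ℝ) < 2 * Real.pi / a * x)]
            exact add_le_add (mul_le_mul_of_nonneg_left h1 hpa.le)
              (mul_le_mul_of_nonneg_left h2 (by positivity))
    · have hlog : Tendsto (fun x : ℝ => |Real.log x|) (nhdsWithin (0:ℝ) (Set.Ioi 0)) atTop :=
        tendsto_abs_atBot_atTop.comp Real.tendsto_log_nhdsGT_zero
      have t1 : Tendsto (fun x : ℝ => (2 * Real.pi / a) * (8 * M / |Real.log x|))
          (nhdsWithin (0:ℝ) (Set.Ioi 0)) (nhds 0) := by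
        have h' : Tendsto (fun x : ℝ => |Real.log x|⁻¹) (nhdsWithin (0:ℝ) (Set.Ioi 0)) (nhds 0) :=
          tendsto_inv_atTop_zero.comp hlog
        have := (h'.const_mul ((2 * Real.pi / a) * (8 * M)))
        simp only [mul_zero] at this
        convert this using 2 with x
        rw [div_eq_mul_inv]
        ring
      have t2 : Tendsto (fun x : ℝ => (2 * Real.pi / a * x) * (8 * M))
          (nhdsWithin (0:ℝ) (Set.Ioi 0)) (nhds 0) := by
        have hid : Tendsto (fun x : ℝ => x) (nhdsWithin (0:ℝ) (Set.Ioi 0)) (nhds 0) :=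
          Filter.Tendsto.mono_left tendsto_id nhdsWithin_le_nhds
        have := (hid.const_mul (2 * Real.pi / a)).mul_const (8 * M)
        simpa using this
      simpa using t1.add t2
  · -- the precise representation
    filter_upwards [hmem] with x hx
    obtain ⟨heq, h1, h2, -, -⟩ := main x hx
    exact ⟨del1 c x, del2 c x, h1, h2, heq⟩
  · -- reality and positivity
    filter_upwards [hmem] with x hx
    obtain ⟨heq, h1, h2, ⟨E1, hE1⟩, ⟨E2, hE2⟩⟩ := main x hx
    obtain ⟨hx0, -, hLx, hx16, hlx, -, hlne⟩ := hfacts x hx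
    have hLpos : (0 : ℝ) < |Real.log x| := by nlinarith
    have hLne : Real.log x ≠ 0 := abs_pos.mp hLpos
    have hE1b : |E1| ≤ 8 * M / |Real.log x| := by
      rw [← Real.norm_eq_abs E1, ← Complex.norm_real E1, ← hE1]; exact h1
    have hE2b : |E2| ≤ 8 * M := by
      rw [← Real.norm_eq_abs E2, ← Complex.norm_real E2, ← hE2]; exact h2
    have hcast : ((2 * Real.pi / (a * (Real.log x) ^ 2) : ℝ) : ℂ) *
        ((1 / (x : ℂ)) * (1 + (E1 : ℂ)) + (E2 : ℂ))
        = (((2 * Real.pi / (a * (Real.log x) ^ 2)) * ((1 / x) * (1 + E1) + E2) : ℝ) : ℂ) := by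
      push_cast
      ring
    rw [heq, hE1, hE2, hcast]
    refine ⟨Complex.ofReal_im _, ?_⟩
    rw [Complex.ofReal_re]
    have hE1half : |E1| ≤ 1 / 2 := by
      refine hE1b.trans ?_
      rw [div_le_iff₀ hLpos]
      nlinarith
    have h1x : 16 * M + 1 < 1 / x := by
      rw [lt_div_iff₀ hx0]
      have := mul_lt_mul_of_pos_left hx16 (by positivity : (0:ℝ) < 16 * M + 1)
      calc (16 * M + 1) * x < (16 * M + 1) * (1 / (16 * M + 1)) := this
        _ = 1 := by field_simp
    have hE1lb : -(1/2 : ℝ) ≤ E1 := by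
      have := abs_le.mp hE1half
      linarith [this.1]
    have hE2lb : -(8 * M) ≤ E2 := by
      have := abs_le.mp hE2b
      linarith [this.1]
    have hpos2 : 0 < (1 / x) * (1 + E1) + E2 := by
      have hhalfpos : (0:ℝ) < 1 / x := by positivity
      have hstep : (1 / x) * (1 / 2) ≤ (1 / x) * (1 + E1) :=
        mul_le_mul_of_nonneg_left (by linarith) hhalfpos.le
      nlinarith
    have hfac : (0:ℝ) < 2 * Real.pi / (a * (Real.log x) ^ 2) := by
      have : (0:ℝ) < (Real.log x) ^ 2 := by positivity
      positivity
    exact mul_pos hfac hpos2
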